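/- For all integers m, n ≥ 3, the brush number of C_m × C_n is at most 2(m + n − 2). -/

import Mathlib

open Finset SimpleGraph

open scoped Classical in
/-- The number of brushes needed at `v` in the cleaning process induced by the
ordering `σ` of the vertices: `max (0, d⁺(v) - d⁻(v))` (truncated `ℕ` subtraction),
where `d⁺(v)` counts neighbours `u` with `σ v < σ u` and `d⁻(v)` those with `σ u < σ v`. -/
noncomputable def brushWeight {V : Type} [Fintype V] (G : SimpleGraph V)
    (σ : V ≃ Fin (Fintype.card V)) (v : V) : ℕ :=
  (Finset.univ.filter (fun u => G.Adj v u ∧ σ v < σ u)).card -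
    (Finset.univ.filter (fun u => G.Adj v u ∧ σ u < σ v)).card

/-- The brush number of `G`: the minimum over all orderings `σ` of the vertices of
the total number of brushes `∑ v, w_σ(v)`. -/
noncomputable def brushNumber {V : Type} [Fintype V] (G : SimpleGraph V) : ℕ :=
  ⨅ σ : V ≃ Fin (Fintype.card V), ∑ v, brushWeight G σ v

lemma card_filter_four {V : Type} [Fintype V] [DecidableEq V]
    (Q P : V → Prop) [DecidablePred P] [DecidablePred fun u => Q u ∧ P u] (v1 v2 v3 v4 : V)
    (h12 : v1 ≠ v2) (h13 : v1 ≠ v3) (h14 : v1 ≠ v4)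
    (h23 : v2 ≠ v3) (h24 : v2 ≠ v4) (h34 : v3 ≠ v4)
    (hQ : ∀ u, Q u ↔ u = v1 ∨ u = v2 ∨ u = v3 ∨ u = v4) :
    (Finset.univ.filter fun u => Q u ∧ P u).card =
      ((if P v1 then 1 else 0) + (if P v2 then 1 else 0)
        + (if P v3 then 1 else 0) + (if P v4 then 1 else 0)) := by
  have h : (Finset.univ.filter fun u => Q u ∧ P u)
      = ({v1, v2, v3, v4} : Finset V).filter P := by
    ext u
    simp [hQ u, or_and_right]
  rw [h, Finset.card_filter,
    show ({v1,v2,v3,v4} : Finset V) = insert v1 (insert v2 (insert v3 {v4})) from rfl,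
    Finset.sum_insert (by simp [h12, h13, h14]),
    Finset.sum_insert (by simp [h23, h24]),
    Finset.sum_insert (by simp [h34]), Finset.sum_singleton]
  ring

lemma mod_succ {m a : ℕ} (hm : 3 ≤ m) (ha : a < m) :
    (a + 1) % m = if a + 1 = m then 0 else a + 1 := by
  split_ifs with h
  · simp [h]
  · exact Nat.mod_eq_of_lt (by omega)

lemma mod_pred {m a : ℕ} (hm : 3 ≤ m) (ha : a < m) :
    (a + (m - 1)) % m = if a = 0 then m - 1 else a - 1 := by
  split_ifs with h
  · subst h; rw [Nat.zero_add]; exact Nat.mod_eq_of_lt (by omega)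
  · have : a + (m - 1) = m + (a - 1) := by omega
    rw [this, Nat.add_mod_left]
    exact Nat.mod_eq_of_lt (by omega)

lemma cycle_adj_iff {m : ℕ} [NeZero m] (hm : 3 ≤ m) (i c : Fin m) :
    (cycleGraph m).Adj i c ↔ c = i - 1 ∨ c = i + 1 := by
  have h1 : (1 : Fin m).val = 1 := by rw [Fin.val_one']; exact Nat.mod_eq_of_lt (by omega)
  rw [cycleGraph_adj']
  constructor
  · rintro (h | h)
    · left
      have hic : i - c = 1 := Fin.ext (h.trans h1.symm)
      rw [← hic]; abel
    · right
      have hic : c - i = 1 := Fin.ext (h.trans h1.symm)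
      rw [← hic]; abel
  · rintro (h | h) <;> subst h
    · left; rw [show i - (i - 1) = 1 by abel, h1]
    · right; rw [show i + 1 - i = 1 by abel, h1]

open scoped Classical in
lemma weight_eq {m n : ℕ} (hm : 3 ≤ m) (hn : 3 ≤ n)
    (σ : (Fin m × Fin n) ≃ Fin (Fintype.card (Fin m × Fin n)))
    (hσ : ∀ x y : Fin m × Fin n, σ x < σ y ↔ x.2.val + n * x.1.val < y.2.val + n * y.1.val)
    (v : Fin m × Fin n) :
    brushWeight (cycleGraph m □ cycleGraph n) σ v =
      (if v.2.val = 0 ∧ v.1.val + 1 < m then 2 else 0) +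
      (if v.1.val = 0 ∧ v.2.val + 1 < n then 2 else 0) := by
  haveI : NeZero m := ⟨by omega⟩
  haveI : NeZero n := ⟨by omega⟩
  obtain ⟨i, j⟩ := v
  have ham : i.val < m := i.isLt
  have hbn : j.val < n := j.isLt
  have h1m : (1 : Fin m).val = 1 := by rw [Fin.val_one']; exact Nat.mod_eq_of_lt (by omega)
  have h1n : (1 : Fin n).val = 1 := by rw [Fin.val_one']; exact Nat.mod_eq_of_lt (by omega)
  have hc1 : (i - 1).val = if i.val = 0 then m - 1 else i.val - 1 := by
    rw [Fin.sub_def]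
    simp only [h1m]
    rw [Nat.add_comm]; exact mod_pred hm ham
  have hc2 : (i + 1).val = if i.val + 1 = m then 0 else i.val + 1 := by
    rw [Fin.add_def]
    simp only [h1m]
    exact mod_succ hm ham
  have hd1 : (j - 1).val = if j.val = 0 then n - 1 else j.val - 1 := by
    rw [Fin.sub_def]
    simp only [h1n]
    rw [Nat.add_comm]; exact mod_pred hn hbn
  have hd2 : (j + 1).val = if j.val + 1 = n then 0 else j.val + 1 := by
    rw [Fin.add_def]
    simp only [h1n]
    exact mod_succ hn hbn
  set u1 : Fin m × Fin n := (i - 1, j) with hu1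
  set u2 : Fin m × Fin n := (i + 1, j) with hu2
  set u3 : Fin m × Fin n := (i, j - 1) with hu3
  set u4 : Fin m × Fin n := (i, j + 1) with hu4
  have hadj : ∀ u, (cycleGraph m □ cycleGraph n).Adj (i, j) u ↔
      u = u1 ∨ u = u2 ∨ u = u3 ∨ u = u4 := by
    rintro ⟨c, d⟩
    rw [boxProd_adj]
    simp only [cycle_adj_iff hm, cycle_adj_iff hn, hu1, hu2, hu3, hu4, Prod.mk.injEq]
    constructor
    · rintro (⟨h | h, rfl⟩ | ⟨h | h, rfl⟩) <;> tauto
    · rintro (⟨rfl, rfl⟩ | ⟨rfl, rfl⟩ | ⟨rfl, rfl⟩ | ⟨rfl, rfl⟩) <;> tauto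
  have key12 : (i - 1).val ≠ (i + 1).val := by rw [hc1, hc2]; split_ifs <;> omega
  have key1i : (i - 1).val ≠ i.val := by rw [hc1]; split_ifs <;> omega
  have key2i : (i + 1).val ≠ i.val := by rw [hc2]; split_ifs <;> omega
  have key34 : (j - 1).val ≠ (j + 1).val := by rw [hd1, hd2]; split_ifs <;> omega
  have h12 : u1 ≠ u2 := fun h => key12 (congrArg (fun p => p.1.val) h)
  have h13 : u1 ≠ u3 := fun h => key1i (congrArg (fun p => p.1.val) h)
  have h14 : u1 ≠ u4 := fun h => key1i (congrArg (fun p => p.1.val) h)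
  have h23 : u2 ≠ u3 := fun h => key2i (congrArg (fun p => p.1.val) h)
  have h24 : u2 ≠ u4 := fun h => key2i (congrArg (fun p => p.1.val) h)
  have h34 : u3 ≠ u4 := fun h => key34 (congrArg (fun p => p.2.val) h)
  have keyL : ∀ x y : ℕ, j.val + n * x < j.val + n * y ↔ x < y := by
    intro x y
    rw [Nat.add_lt_add_iff_left]
    exact Nat.mul_lt_mul_left (by omega)
  have keyR : ∀ x y : ℕ, x + n * i.val < y + n * i.val ↔ x < y :=
    fun x y => Nat.add_lt_add_iff_right
  have hP1 : σ (i, j) < σ u1 ↔ i.val = 0 := by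
    rw [hσ]; dsimp only [hu1]; rw [keyL, hc1]; split_ifs <;> omega
  have hP2 : σ (i, j) < σ u2 ↔ i.val + 1 < m := by
    rw [hσ]; dsimp only [hu2]; rw [keyL, hc2]; split_ifs <;> omega
  have hP3 : σ (i, j) < σ u3 ↔ j.val = 0 := by
    rw [hσ]; dsimp only [hu3]; rw [keyR, hd1]; split_ifs <;> omega
  have hP4 : σ (i, j) < σ u4 ↔ j.val + 1 < n := by
    rw [hσ]; dsimp only [hu4]; rw [keyR, hd2]; split_ifs <;> omega
  have hM1 : σ u1 < σ (i, j) ↔ ¬ i.val = 0 := by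
    rw [hσ]; dsimp only [hu1]; rw [keyL, hc1]; split_ifs <;> omega
  have hM2 : σ u2 < σ (i, j) ↔ ¬ i.val + 1 < m := by
    rw [hσ]; dsimp only [hu2]; rw [keyL, hc2]; split_ifs <;> omega
  have hM3 : σ u3 < σ (i, j) ↔ ¬ j.val = 0 := by
    rw [hσ]; dsimp only [hu3]; rw [keyR, hd1]; split_ifs <;> omega
  have hM4 : σ u4 < σ (i, j) ↔ ¬ j.val + 1 < n := by
    rw [hσ]; dsimp only [hu4]; rw [keyR, hd2]; split_ifs <;> omega
  have e1 : (Finset.univ.filter fun u => (cycleGraph m □ cycleGraph n).Adj (i, j) u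
        ∧ σ (i, j) < σ u).card =
      ((if σ (i, j) < σ u1 then 1 else 0) + (if σ (i, j) < σ u2 then 1 else 0)
        + (if σ (i, j) < σ u3 then 1 else 0) + (if σ (i, j) < σ u4 then 1 else 0)) :=
    card_filter_four _ _ _ _ _ _ h12 h13 h14 h23 h24 h34 hadj
  have e2 : (Finset.univ.filter fun u => (cycleGraph m □ cycleGraph n).Adj (i, j) u
        ∧ σ u < σ (i, j)).card =
      ((if σ u1 < σ (i, j) then 1 else 0) + (if σ u2 < σ (i, j) then 1 else 0)
        + (if σ u3 < σ (i, j) then 1 else 0) + (if σ u4 < σ (i, j) then 1 else 0)) :=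
    card_filter_four _ _ _ _ _ _ h12 h13 h14 h23 h24 h34 hadj
  unfold brushWeight
  rw [e1, e2]
  simp only [hP1, hP2, hP3, hP4, hM1, hM2, hM3, hM4]
  split_ifs <;> omega

lemma sum_lemma (m n : ℕ) (hm : 3 ≤ m) (hn : 3 ≤ n) :
    ∑ a ∈ Finset.range m, ∑ b ∈ Finset.range n,
      ((if b = 0 ∧ a + 1 < m then 2 else 0) + (if a = 0 ∧ b + 1 < n then 2 else 0))
      = 2 * (m + n - 2) := by
  have h1 : ∀ a, ∑ b ∈ Finset.range n, (if b = 0 ∧ a + 1 < m then 2 else 0)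
      = if a + 1 < m then 2 else 0 := by
    intro a
    have : ∀ b, (if b = 0 ∧ a + 1 < m then (2:ℕ) else 0)
        = if b = 0 then (if a + 1 < m then 2 else 0) else 0 := by
      intro b; split_ifs <;> tauto
    simp_rw [this]
    rw [Finset.sum_ite_eq' (Finset.range n) 0, if_pos (Finset.mem_range.mpr (by omega))]
  have h2 : ∀ a, ∑ b ∈ Finset.range n, (if a = 0 ∧ b + 1 < n then 2 else 0)
      = if a = 0 then 2 * (n - 1) else 0 := by
    intro a
    split_ifs with h
    · subst h
      simp only [true_and]
      rw [Finset.sum_ite, Finset.sum_const, Finset.sum_const]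
      have : Finset.filter (fun b => b + 1 < n) (Finset.range n) = Finset.range (n-1) := by
        ext b; simp [Finset.mem_range]; omega
      simp [this]; omega
    · simp [h]
  simp_rw [Finset.sum_add_distrib, h1, h2]
  rw [Finset.sum_ite_eq' (Finset.range m) 0, if_pos (Finset.mem_range.mpr (by omega))]
  have : Finset.filter (fun a => a + 1 < m) (Finset.range m) = Finset.range (m-1) := by
    ext a; simp [Finset.mem_range]; omega
  rw [Finset.sum_ite, Finset.sum_const, Finset.sum_const, this, Finset.card_range]
  simp
  omega

/-- For all integers m, n ≥ 3, the brush number of C_m × C_n is at most 2(m + n − 2). -/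
theorem brushNumber_torus_le (m n : ℕ) (hm : 3 ≤ m) (hn : 3 ≤ n) :
    brushNumber (cycleGraph m □ cycleGraph n) ≤ 2 * (m + n - 2) := by
  have hcard : m * n = Fintype.card (Fin m × Fin n) := by simp
  set σ : (Fin m × Fin n) ≃ Fin (Fintype.card (Fin m × Fin n)) :=
    finProdFinEquiv.trans (finCongr hcard) with hσdef
  have hσ : ∀ x y : Fin m × Fin n, σ x < σ y ↔
      x.2.val + n * x.1.val < y.2.val + n * y.1.val := by
    intro x y
    simp [hσdef, Fin.lt_def]
  have hsum : ∑ v, brushWeight (cycleGraph m □ cycleGraph n) σ v = 2 * (m + n - 2) := by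
    calc ∑ v, brushWeight (cycleGraph m □ cycleGraph n) σ v
        = ∑ v : Fin m × Fin n, ((if v.2.val = 0 ∧ v.1.val + 1 < m then 2 else 0) +
            (if v.1.val = 0 ∧ v.2.val + 1 < n then 2 else 0)) := by
          exact Finset.sum_congr rfl fun v _ => weight_eq hm hn σ hσ v
      _ = ∑ a ∈ Finset.range m, ∑ b ∈ Finset.range n,
            ((if b = 0 ∧ a + 1 < m then 2 else 0) + (if a = 0 ∧ b + 1 < n then 2 else 0)) := by
          rw [Fintype.sum_prod_type]
          rw [← Fin.sum_univ_eq_sum_range (fun a => ∑ b ∈ Finset.range n,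
            ((if b = 0 ∧ a + 1 < m then 2 else 0) + (if a = 0 ∧ b + 1 < n then 2 else 0))) m]
          refine Finset.sum_congr rfl fun i _ => ?_
          rw [← Fin.sum_univ_eq_sum_range (fun b =>
            ((if b = 0 ∧ i.val + 1 < m then 2 else 0) + (if i.val = 0 ∧ b + 1 < n then 2 else 0))) n]
      _ = 2 * (m + n - 2) := sum_lemma m n hm hn
  calc brushNumber (cycleGraph m □ cycleGraph n)
      ≤ ∑ v, brushWeight (cycleGraph m □ cycleGraph n) σ v :=
        ciInf_le (OrderBot.bddBelow _) σ
    _ = 2 * (m + n - 2) := hsum
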